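/- The star chromatic index of the cycle C_n equals 3 if n ≠ 5, and equals 4 if n = 5. -/

import Mathlib

open SimpleGraph
open scoped Fin.NatCast Fin.CommRing

/-- A star edge-coloring with `k` colors: a proper edge-coloring such that no
path or cycle with four edges is bicolored. -/
def IsStarEdgeColoring {V : Type*} {k : ℕ} (G : SimpleGraph V) (c : Sym2 V → Fin k) : Prop :=
  (∀ ⦃e f : Sym2 V⦄, e ∈ G.edgeSet → f ∈ G.edgeSet → e ≠ f →
      (∃ v, v ∈ e ∧ v ∈ f) → c e ≠ c f) ∧
  (∀ v0 v1 v2 v3 v4 : V, G.Adj v0 v1 → G.Adj v1 v2 → G.Adj v2 v3 → G.Adj v3 v4 →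
      v0 ≠ v2 → v0 ≠ v3 → v1 ≠ v3 → v1 ≠ v4 → v2 ≠ v4 →
      ¬ (c s(v0, v1) = c s(v2, v3) ∧ c s(v1, v2) = c s(v3, v4)))



def col (n j : ℕ) : ℕ :=
  if n % 3 = 0 then j % 3
  else if n % 3 = 1 then (if j = n - 1 then 1 else j % 3)
  else if j = n - 3 then 0 else if j = n - 2 then 2 else j % 3

lemma col_lt (n j : ℕ) : col n j < 3 := by
  unfold col; split_ifs <;> first | omega | simp

lemma mod_cases (n j : ℕ) (hn : 3 ≤ n) (hj : j < n) :
    ((j+1) % n = j+1 ∧ (j+2) % n = j+2 ∧ (j+3) % n = j+3 ∧ j + 3 < n) ∨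
    (j = n-3 ∧ (j+1) % n = n-2 ∧ (j+2) % n = n-1 ∧ (j+3) % n = 0) ∨
    (j = n-2 ∧ (j+1) % n = n-1 ∧ (j+2) % n = 0 ∧ (j+3) % n = 1) ∨
    (j = n-1 ∧ (j+1) % n = 0 ∧ (j+2) % n = 1 ∧ (j+3) % n = 2) := by
  rcases (by omega : j + 3 < n ∨ j = n-3 ∨ j = n-2 ∨ j = n-1) with h | h | h | h
  · exact Or.inl ⟨Nat.mod_eq_of_lt (by omega), Nat.mod_eq_of_lt (by omega),
      Nat.mod_eq_of_lt (by omega), h⟩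
  · refine Or.inr (Or.inl ⟨h, ?_, ?_, ?_⟩)
    · rw [Nat.mod_eq_of_lt (by omega)]; omega
    · rw [Nat.mod_eq_of_lt (by omega)]; omega
    · rw [show j + 3 = n by omega, Nat.mod_self]
  · refine Or.inr (Or.inr (Or.inl ⟨h, ?_, ?_, ?_⟩))
    · rw [Nat.mod_eq_of_lt (by omega)]; omega
    · rw [show j + 2 = n by omega, Nat.mod_self]
    · rw [show j + 3 = n + 1 by omega, Nat.add_mod_left, Nat.mod_eq_of_lt (by omega)]
  · refine Or.inr (Or.inr (Or.inr ⟨h, ?_, ?_, ?_⟩))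
    · rw [show j + 1 = n by omega, Nat.mod_self]
    · rw [show j + 2 = n + 1 by omega, Nat.add_mod_left, Nat.mod_eq_of_lt (by omega)]
    · rw [show j + 3 = n + 2 by omega, Nat.add_mod_left, Nat.mod_eq_of_lt (by omega)]

lemma colP (n j : ℕ) (hn : 3 ≤ n) (h5 : n ≠ 5) (hj : j < n) :
    col n j ≠ col n ((j+1) % n) := by
  rcases mod_cases n j hn hj with ⟨h1, h2, h3, h4⟩ | ⟨hj', h1, h2, h3⟩ |
    ⟨hj', h1, h2, h3⟩ | ⟨hj', h1, h2, h3⟩ <;> rw [h1] <;> unfold col <;>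
    split_ifs <;> first | omega | simp

set_option maxHeartbeats 1000000 in
lemma colS (n j : ℕ) (hn : 3 ≤ n) (h5 : n ≠ 5) (hj : j < n) :
    ¬(col n j = col n ((j+2) % n) ∧ col n ((j+1) % n) = col n ((j+3) % n)) := by
  rcases mod_cases n j hn hj with ⟨h1, h2, h3, h4⟩ | ⟨hj', h1, h2, h3⟩ |
    ⟨hj', h1, h2, h3⟩ | ⟨hj', h1, h2, h3⟩ <;> rw [h1, h2, h3] <;> unfold col <;>
    split_ifs <;> first | omega | simp



lemma myTwoNeZero (m : ℕ) : (2 : Fin (m+3)) ≠ 0 := by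
  intro h
  have := congrArg Fin.val h
  simp [Fin.val_two] at this
  rw [Nat.mod_eq_of_lt (by omega)] at this; omega

lemma cg_adj (m : ℕ) (u v : Fin (m+2)) :
    (cycleGraph (m+2)).Adj u v ↔ v = u + 1 ∨ u = v + 1 := by
  rw [cycleGraph_adj]
  constructor
  · rintro (h | h)
    · right; rw [← h]; ring
    · left; rw [← h]; ring
  · rintro (h | h)
    · right; rw [h]; ring
    · left; rw [h]; ring

lemma cg_adj' (m : ℕ) (u v : Fin (m+3)) :
    (cycleGraph (m+3)).Adj u v ↔ v = u + 1 ∨ u = v + 1 := cg_adj (m+1) u v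

lemma edge_ne (m : ℕ) (i : Fin (m+3)) : i ≠ i + 1 := by
  intro h
  have h2 := (left_eq_add.mp h)
  have := congrArg Fin.val h2
  simp [Fin.val_one] at this

lemma sym2_inj (m : ℕ) (i j : Fin (m+3)) (h : s(i, i+1) = s(j, j+1)) : i = j := by
  rw [Sym2.eq_iff] at h
  rcases h with ⟨h1, h2⟩ | ⟨h1, h2⟩
  · exact h1
  · exfalso
    apply myTwoNeZero m
    have : i = i + 2 := by
      conv_lhs => rw [h1, ← h2]
      ring
    exact (left_eq_add.mp this)

lemma edge_mem (m : ℕ) (i : Fin (m+3)) : s(i, i+1) ∈ (cycleGraph (m+3)).edgeSet := by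
  rw [mem_edgeSet, cg_adj']; left; rfl

lemma edge_form (m : ℕ) (e : Sym2 (Fin (m+3))) (he : e ∈ (cycleGraph (m+3)).edgeSet) :
    ∃ i, e = s(i, i+1) := by
  induction e with
  | _ a b =>
    rw [mem_edgeSet, cg_adj'] at he
    rcases he with h | h
    · exact ⟨a, by rw [h]⟩
    · exact ⟨b, by rw [h, Sym2.eq_swap]⟩


def gfun {m k : ℕ} (f : Fin (m+3) → Fin k) (u v : Fin (m+3)) : Fin k :=
  if v = u + 1 then f u else if u = v + 1 then f v else f 0

lemma gfun_symm {m k : ℕ} (f : Fin (m+3) → Fin k) (u v : Fin (m+3)) :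
    gfun f u v = gfun f v u := by
  unfold gfun
  by_cases h1 : v = u + 1 <;> by_cases h2 : u = v + 1
  · exfalso
    apply myTwoNeZero m
    apply left_eq_add.mp
    show u = u + 2
    conv_lhs => rw [h2, h1]
    ring
  · rw [if_pos h1, if_neg h2, if_pos h1]
  · rw [if_neg h1, if_pos h2, if_pos h2]
  · rw [if_neg h1, if_neg h2, if_neg h2, if_neg h1]

def cfun {m k : ℕ} (f : Fin (m+3) → Fin k) : Sym2 (Fin (m+3)) → Fin k :=
  Sym2.lift ⟨gfun f, gfun_symm f⟩

lemma cfun_edge {m k : ℕ} (f : Fin (m+3) → Fin k) (u : Fin (m+3)) :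
    cfun f s(u, u+1) = f u := by
  show gfun f u (u+1) = f u
  unfold gfun
  rw [if_pos rfl]

lemma star_of_seq (m k : ℕ) (f : Fin (m+3) → Fin k)
    (hP : ∀ i, f i ≠ f (i+1))
    (hS : ∀ i, ¬(f i = f (i+2) ∧ f (i+1) = f (i+3))) :
    IsStarEdgeColoring (cycleGraph (m+3)) (cfun f) := by
  constructor
  · -- properness
    intro e e' he he' hne hv
    obtain ⟨v, hv, hv'⟩ := hv
    obtain ⟨i, rfl⟩ := edge_form m e he
    obtain ⟨j, rfl⟩ := edge_form m e' he'
    have hij : i ≠ j := fun h => hne (by rw [h])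
    rw [cfun_edge, cfun_edge]
    rw [Sym2.mem_iff] at hv hv'
    rcases hv with rfl | rfl <;> rcases hv' with h | h
    · exact absurd h hij
    · rw [h]; exact (hP j).symm
    · rw [← h]; exact hP i
    · exact absurd (add_right_cancel h) hij
  · intro v0 v1 v2 v3 v4 h01 h12 h23 h34 h02 h03 h13 h14 h24
    rw [cg_adj'] at h01 h12 h23 h34
    rcases h01 with h01 | h01
    · -- ascending
      subst h01
      rcases h12 with h12 | h12
      case inr => exact absurd (add_right_cancel h12.symm).symm h02
      subst h12
      rcases h23 with h23 | h23
      case inr => exact absurd (add_right_cancel h23.symm).symm h13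
      subst h23
      rcases h34 with h34 | h34
      case inr => exact absurd (add_right_cancel h34.symm).symm h24
      subst h34
      have e2 : v0 + 1 + 1 = v0 + 2 := by ring
      have e4 : v0 + 1 + 1 + 1 = v0 + 3 := by ring
      rw [show s(v0 + 1 + 1, v0 + 1 + 1 + 1) = s(v0 + 2, (v0+2) + 1) from by rw [e2],
        show s(v0 + 1 + 1 + 1, v0 + 1 + 1 + 1 + 1) = s(v0 + 3, (v0+3) + 1) from by rw [e4],
        show s(v0 + 1, v0 + 1 + 1) = s(v0 + 1, (v0+1) + 1) from rfl,
        cfun_edge, cfun_edge, cfun_edge, cfun_edge]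
      exact hS v0
    · -- descending
      rcases h12 with h12 | h12
      case inl => exact absurd (h01.trans h12.symm) h02
      rcases h23 with h23 | h23
      case inl => exact absurd (h12.trans h23.symm) h13
      rcases h34 with h34 | h34
      case inl => exact absurd (h23.trans h34.symm) h24
      subst h01; subst h12; subst h23; subst h34
      have e2 : v4 + 1 + 1 = v4 + 2 := by ring
      have e4 : v4 + 1 + 1 + 1 = v4 + 3 := by ring
      rw [Sym2.eq_swap (a := v4 + 1 + 1 + 1 + 1) (b := v4 + 1 + 1 + 1),
        Sym2.eq_swap (a := v4 + 1 + 1) (b := v4 + 1),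
        Sym2.eq_swap (a := v4 + 1 + 1 + 1) (b := v4 + 1 + 1),
        Sym2.eq_swap (a := v4 + 1) (b := v4),
        show s(v4 + 1 + 1 + 1, v4 + 1 + 1 + 1 + 1) = s(v4 + 3, (v4+3) + 1) from by rw [e4],
        show s(v4 + 1, v4 + 1 + 1) = s(v4 + 1, (v4+1) + 1) from rfl,
        show s(v4 + 1 + 1, v4 + 1 + 1 + 1) = s(v4 + 2, (v4+2) + 1) from by rw [e2],
        cfun_edge, cfun_edge, cfun_edge, cfun_edge]
      rintro ⟨a, b⟩
      exact hS v4 ⟨b.symm, a.symm⟩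

lemma prop_seq {m k : ℕ} {c : Sym2 (Fin (m+3)) → Fin k}
    (hc : IsStarEdgeColoring (cycleGraph (m+3)) c) (i : Fin (m+3)) :
    c s(i, i+1) ≠ c s(i+1, i+1+1) := by
  apply hc.1 (edge_mem m i) (edge_mem m (i+1))
  · intro h
    exact edge_ne m i (sym2_inj m i (i+1) h)
  · exact ⟨i+1, Sym2.mem_mk_right i (i+1), Sym2.mem_mk_left (i+1) (i+1+1)⟩

lemma fin2_trans : ∀ a b c : Fin 2, a ≠ b → b ≠ c → a = c := by decide

lemma no_two_coloring (m : ℕ) (c : Sym2 (Fin (m+3)) → Fin 2) :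
    ¬ IsStarEdgeColoring (cycleGraph (m+3)) c := by
  intro hc
  have hP : ∀ i : Fin (m+3), c s(i, i+1) ≠ c s(i+1, (i+1)+1) := fun i => prop_seq hc i
  cases m with
  | zero =>
    have h0 := hP 0
    have h1 := hP 1
    have h2 := hP 2
    have e : (2 : Fin (0+3)) + 1 = 0 := by decide
    have e1 : (0 : Fin (0+3)) + 1 = 1 := by decide
    have e2 : (1 : Fin (0+3)) + 1 = 2 := by decide
    simp only [e, e1, e2] at h0 h1 h2
    exact h2 (fin2_trans _ _ _ h0 h1).symm
  | succ m =>
    cases m with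
    | zero =>
      have h0 := hP 0
      have h1 := hP 1
      have h2 := hP 2
      have e0 : (0 : Fin (0+1+3)) + 1 = 1 := by decide
      have e1 : (1 : Fin (0+1+3)) + 1 = 2 := by decide
      have e2 : (2 : Fin (0+1+3)) + 1 = 3 := by decide
      have e3 : (3 : Fin (0+1+3)) + 1 = 0 := by decide
      simp only [e0, e1, e2, e3] at h0 h1 h2
      have hstar := hc.2 0 1 2 3 0 (by decide) (by decide) (by decide) (by decide)
        (by decide) (by decide) (by decide) (by decide) (by decide)
      exact hstar ⟨fin2_trans _ _ _ h0 h1, fin2_trans _ _ _ h1 h2⟩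
    | succ m =>
      set va : ℕ → Fin (m+2+3) := fun j => ((j : ℕ) : Fin (m+2+3)) with hva
      have cast_succ : ∀ j : ℕ, va (j+1) = va j + 1 := by
        intro j; simp only [hva]; push_cast; ring
      have vne : ∀ j l : ℕ, j < m+5 → l < m+5 → j ≠ l → va j ≠ va l := by
        intro j l hj hl hjl h
        have := congrArg Fin.val h
        simp only [hva, Fin.val_natCast] at this
        rw [Nat.mod_eq_of_lt (by omega), Nat.mod_eq_of_lt (by omega)] at this
        exact hjl this
      have adj : ∀ j : ℕ, (cycleGraph (m+2+3)).Adj (va j) (va (j+1)) := by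
        intro j
        exact (cg_adj' (m+2) _ _).mpr (Or.inl (cast_succ j))
      have d02 := vne 0 2 (by omega) (by omega) (by decide)
      have d03 := vne 0 3 (by omega) (by omega) (by decide)
      have d13 := vne 1 3 (by omega) (by omega) (by decide)
      have d14 := vne 1 4 (by omega) (by omega) (by decide)
      have d24 := vne 2 4 (by omega) (by omega) (by decide)
      have hstar := hc.2 (va 0) (va 1) (va 2) (va 3) (va 4) (adj 0) (adj 1) (adj 2) (adj 3)
        d02 d03 d13 d14 d24
      apply hstar
      have E1 : va 1 = va 0 + 1 := cast_succ 0
      have E2 : va 2 = va 1 + 1 := cast_succ 1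
      have E3 : va 3 = va 2 + 1 := cast_succ 2
      have E4 : va 4 = va 3 + 1 := cast_succ 3
      rw [E4, E3, E2, E1]
      have g0 := hP (va 0)
      have g1 := hP (va 0 + 1)
      have g2 := hP (va 0 + 1 + 1)
      exact ⟨fin2_trans _ _ _ g0 g1, fin2_trans _ _ _ g1 g2⟩

set_option maxRecDepth 20000 in
set_option maxHeartbeats 1000000 in
lemma fin53 : ∀ f : Fin 5 → Fin 3,
    ¬ ((∀ i, f i ≠ f (i+1)) ∧ (∀ i, ¬(f i = f (i+2) ∧ f (i+1) = f (i+3)))) := by decide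

lemma no_three_coloring_five (c : Sym2 (Fin 5) → Fin 3) :
    ¬ IsStarEdgeColoring (cycleGraph 5) c := by
  intro hc
  set f : Fin 5 → Fin 3 := fun i => c s(i, i+1) with hf
  have hc' : IsStarEdgeColoring (cycleGraph (2+3)) c := hc
  have hP : ∀ i, f i ≠ f (i+1) := fun i => prop_seq (m := 2) hc' i
  have gen : ∀ (x d : Fin 5), d ≠ 0 → x ≠ x + d := fun x d hd h => hd (left_eq_add.mp h)
  have hS : ∀ i : Fin 5, ¬(f i = f (i+2) ∧ f (i+1) = f (i+3)) := by
    intro i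
    have adj : ∀ x : Fin 5, (cycleGraph 5).Adj x (x+1) := by
      intro x
      exact (cg_adj' 2 x (x+1)).mpr (Or.inl rfl)
    have a12 : i + 2 = (i + 1) + 1 := by ring
    have a23 : i + 3 = (i + 2) + 1 := by ring
    have a34 : i + 4 = (i + 3) + 1 := by ring
    have hstar := hc.2 i (i+1) (i+2) (i+3) (i+4)
      (adj i) (a12 ▸ adj (i+1)) (a23 ▸ adj (i+2)) (a34 ▸ adj (i+3))
      (gen i 2 (by decide))
      (gen i 3 (by decide))
      (by rw [show i + 3 = (i+1) + 2 from by ring]; exact gen (i+1) 2 (by decide))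
      (by rw [show i + 4 = (i+1) + 3 from by ring]; exact gen (i+1) 3 (by decide))
      (by rw [show i + 4 = (i+2) + 2 from by ring]; exact gen (i+2) 2 (by decide))
    intro ⟨h1, h2⟩
    apply hstar
    rw [show s(i+2, i+3) = s(i+2, (i+2)+1) from by rw [← a23],
      show s(i+3, i+4) = s(i+3, (i+3)+1) from by rw [← a34],
      show s(i+1, i+2) = s(i+1, (i+1)+1) from by rw [← a12]]
    exact ⟨h1, h2⟩
  exact fin53 f ⟨hP, hS⟩

lemma val_add_cast (m : ℕ) (i : Fin (m+3)) (k : ℕ) :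
    (i + (k : Fin (m+3))).val = (i.val + k) % (m+3) := by
  simp [Fin.add_def, Nat.add_mod_mod]

lemma val_add_one (m : ℕ) (i : Fin (m+3)) : (i + 1).val = (i.val + 1) % (m+3) := by
  have := val_add_cast m i 1; norm_num at this ⊢; exact this
lemma val_add_two (m : ℕ) (i : Fin (m+3)) : (i + 2).val = (i.val + 2) % (m+3) := by
  have := val_add_cast m i 2; norm_num at this ⊢; exact this
lemma val_add_three (m : ℕ) (i : Fin (m+3)) : (i + 3).val = (i.val + 3) % (m+3) := by
  have := val_add_cast m i 3; norm_num at this ⊢; exact this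

lemma exists_three (m : ℕ) (h5 : m + 3 ≠ 5) :
    ∃ c : Sym2 (Fin (m+3)) → Fin 3, IsStarEdgeColoring (cycleGraph (m+3)) c := by
  set f : Fin (m+3) → Fin 3 := fun i => ⟨col (m+3) i.val, col_lt _ _⟩ with hf
  refine ⟨cfun f, star_of_seq m 3 f ?_ ?_⟩
  · intro i h
    have hv := congrArg Fin.val h
    simp only [hf, val_add_one] at hv
    exact colP (m+3) i.val (by omega) h5 i.isLt hv
  · rintro i ⟨h1, h2⟩
    have hv1 := congrArg Fin.val h1
    have hv2 := congrArg Fin.val h2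
    simp only [hf, val_add_one, val_add_two, val_add_three] at hv1 hv2
    exact colS (m+3) i.val (by omega) h5 i.isLt ⟨hv1, hv2⟩

lemma exists_four_five :
    ∃ c : Sym2 (Fin 5) → Fin 4, IsStarEdgeColoring (cycleGraph 5) c := by
  have h := star_of_seq 2 4 (![0,1,2,3,1]) (by decide) (by decide)
  exact ⟨_, h⟩

lemma mono_star {V : Type*} {k l : ℕ} (h : k ≤ l) (G : SimpleGraph V) (c : Sym2 V → Fin k)
    (hc : IsStarEdgeColoring G c) : IsStarEdgeColoring G (fun e => Fin.castLE h (c e)) := by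
  constructor
  · intro e f he hf hne hv heq
    exact hc.1 he hf hne hv (Fin.castLE_injective h heq)
  · rintro v0 v1 v2 v3 v4 a b d e h02 h03 h13 h14 h24 ⟨x, y⟩
    exact hc.2 v0 v1 v2 v3 v4 a b d e h02 h03 h13 h14 h24
      ⟨Fin.castLE_injective h x, Fin.castLE_injective h y⟩


/-- The star chromatic index: the least `k` admitting a star `k`-edge-coloring. -/
noncomputable def starChromaticIndex {V : Type*} (G : SimpleGraph V) : ℕ :=
  sInf {k | ∃ c : Sym2 V → Fin k, IsStarEdgeColoring G c}

theorem star_chromatic_index_cycle (n : ℕ) (hn : 3 ≤ n) :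
    (n ≠ 5 → starChromaticIndex (cycleGraph n) = 3) ∧
    (n = 5 → starChromaticIndex (cycleGraph n) = 4) := by
  obtain ⟨m, rfl⟩ : ∃ m, n = m + 3 := ⟨n - 3, by omega⟩
  unfold starChromaticIndex
  constructor
  · intro h5
    apply le_antisymm
    · exact Nat.sInf_le (show (3:ℕ) ∈ {k | ∃ c : Sym2 (Fin (m+3)) → Fin k, IsStarEdgeColoring (cycleGraph (m+3)) c} from exists_three m h5)
    · apply le_csInf ⟨3, (show (3:ℕ) ∈ {k | ∃ c : Sym2 (Fin (m+3)) → Fin k, IsStarEdgeColoring (cycleGraph (m+3)) c} from exists_three m h5)⟩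
      intro k hk
      by_contra hlt
      push_neg at hlt
      obtain ⟨c, hc⟩ := hk
      exact no_two_coloring m (fun e => Fin.castLE (by omega) (c e))
        (mono_star (by omega) _ c hc)
  · intro h5
    have hm : m = 2 := by omega
    subst hm
    apply le_antisymm
    · exact Nat.sInf_le (show (4:ℕ) ∈ {k | ∃ c : Sym2 (Fin 5) → Fin k, IsStarEdgeColoring (cycleGraph 5) c} from exists_four_five)
    · apply le_csInf ⟨4, (show (4:ℕ) ∈ {k | ∃ c : Sym2 (Fin 5) → Fin k, IsStarEdgeColoring (cycleGraph 5) c} from exists_four_five)⟩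
      intro k hk
      by_contra hlt
      push_neg at hlt
      obtain ⟨c, hc⟩ := hk
      exact no_three_coloring_five (fun e => Fin.castLE (by omega) (c e))
        (mono_star (by omega) _ c hc)
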